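/- Let $X$ be a compact topological space, $U$ a set, $K \subseteq X$ compact with nonempty interior, and for each $u \in U$ let $f_u : X \to X$ be continuous. Suppose $K$ is weakly controlled invariant: there exists $t \in \mathbb{N}$ such that for every $x \in X$ there exist inputs $H_0(x), \dots, H_{t-1}(x) \in U$ with $f_{H_{t-1}(x)} \circ \cdots \circ f_{H_0(x)}(x) \in \mathrm{int}\,K$. Then there exist $\tau \in \mathbb{N}$, a finite open cover $\alpha$ of $X$, and maps $G_0, \dots, G_{\tau-1} : \alpha \to U$ such that for every $A \in \alpha$, $f_{G_{\tau-1}(A)} \circ \cdots \circ f_{G_0(A)}(A) \subseteq \mathrm{int}\,K$. -/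

import Mathlib

/-- `seqComp f u x` applies the inputs `u 0, u 1, …` in order to the state `x`
via the continuous maps `f u`. -/
def seqComp {X U : Type*} (f : U → X → X) {n : ℕ} (u : Fin n → U) (x : X) : X :=
  (List.ofFn u).foldl (fun y a => f a y) x

lemma foldl_continuous {X U : Type*} [TopologicalSpace X] (f : U → X → X)
    (hf : ∀ u, Continuous (f u)) (l : List U) :
    Continuous (fun x : X => l.foldl (fun y a => f a y) x) := by
  induction l with
  | nil => simpa using continuous_id'
  | cons a l ih =>
    simpa [List.foldl_cons, Function.comp_def] using ih.comp (hf a)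

lemma seqComp_continuous {X U : Type*} [TopologicalSpace X] (f : U → X → X)
    (hf : ∀ u, Continuous (f u)) {n : ℕ} (u : Fin n → U) :
    Continuous (fun x : X => seqComp f u x) :=
  foldl_continuous f hf _

/-- Feasibility of constraint (C) in the fully observed case: if `K` is weakly controlled
invariant (each state can be steered into `int K` in `t` steps) and each `f_u` is
continuous, then there exist `τ`, a finite open cover `α` of `X` and maps `G_k : α → U`
steering every cover element entirely into `int K`. -/
theorem c_feasible_fully_observed {X U : Type*} [TopologicalSpace X] [CompactSpace X]
    (K : Set X) (hK : IsCompact K) (hKint : (interior K).Nonempty)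
    (f : U → X → X) (hf : ∀ u, Continuous (f u))
    (hWCI : ∃ t : ℕ, 0 < t ∧ ∀ x : X, ∃ H : Fin t → U, seqComp f H x ∈ interior K) :
    ∃ τ : ℕ, 0 < τ ∧ ∃ α : Finset (Set X), (∀ A ∈ α, IsOpen A) ∧
      Set.univ ⊆ ⋃₀ (α : Set (Set X)) ∧
      ∃ G : Set X → Fin τ → U, ∀ A ∈ α, ∀ x ∈ A, seqComp f (G A) x ∈ interior K := by
  classical
  obtain ⟨t, ht, hH⟩ := hWCI
  choose H hHmem using hH
  -- open sets
  set V : X → Set X := fun x => (fun y => seqComp f (H x) y) ⁻¹' (interior K) with hV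
  have hVopen : ∀ x, IsOpen (V x) :=
    fun x => (isOpen_interior).preimage (seqComp_continuous f hf (H x))
  have hVmem : ∀ x, x ∈ V x := fun x => hHmem x
  have hcov : Set.univ ⊆ ⋃ x : X, V x := fun y _ => Set.mem_iUnion.2 ⟨y, hVmem y⟩
  obtain ⟨s, hs⟩ := (isCompact_univ).elim_finite_subcover V hVopen hcov
  refine ⟨t, ht, s.image V, ?_, ?_, ?_⟩
  · intro A hA
    obtain ⟨x, _, rfl⟩ := Finset.mem_image.1 hA
    exact hVopen x
  · intro y _
    have := hs (Set.mem_univ y)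
    simp only [Set.mem_iUnion, exists_prop] at this
    obtain ⟨x, hx, hyx⟩ := this
    exact ⟨V x, by simpa using Finset.mem_image_of_mem V hx, hyx⟩
  · refine ⟨fun A => if h : ∃ x, V x = A then H h.choose else H hKint.some, ?_⟩
    intro A hA x hx
    obtain ⟨z, _, rfl⟩ := Finset.mem_image.1 hA
    have h : ∃ w, V w = V z := ⟨z, rfl⟩
    simp only [dif_pos h]
    have := h.choose_spec
    rw [← this] at hx
    exact hx
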